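/- Let t1, t2, t3 be rational numbers with (t1·t2·t3)^2 ≠ 1, and define a1 = 2t1(1 + t1t2(1 + t2t3))/((t1t2t3 - 1)(t1t2t3 + 1)), a2 = 2t2(1 + t2t3(1 + t3t1))/((t1t2t3 - 1)(t1t2t3 + 1)), a3 = 2t3(1 + t3t1(1 + t1t2))/((t1t2t3 - 1)(t1t2t3 + 1)). Then each of a1·a2 + 1, a1·a3 + 1, and a2·a3 + 1 is the square of a rational number. -/

import Mathlib

/-- Lasić's symmetric parametrization produces rational Diophantine triples. -/
theorem stmt_5 (t1 t2 t3 : ℚ) (h : (t1 * t2 * t3) ^ 2 ≠ 1)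
    (a1 a2 a3 : ℚ)
    (ha1 : a1 = 2 * t1 * (1 + t1 * t2 * (1 + t2 * t3)) /
      ((t1 * t2 * t3 - 1) * (t1 * t2 * t3 + 1)))
    (ha2 : a2 = 2 * t2 * (1 + t2 * t3 * (1 + t3 * t1)) /
      ((t1 * t2 * t3 - 1) * (t1 * t2 * t3 + 1)))
    (ha3 : a3 = 2 * t3 * (1 + t3 * t1 * (1 + t1 * t2)) /
      ((t1 * t2 * t3 - 1) * (t1 * t2 * t3 + 1))) :
    (∃ q : ℚ, a1 * a2 + 1 = q ^ 2) ∧ (∃ q : ℚ, a1 * a3 + 1 = q ^ 2) ∧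
      (∃ q : ℚ, a2 * a3 + 1 = q ^ 2) := by
  have h1 : t1 * t2 * t3 - 1 ≠ 0 := by
    intro h'; apply h; have : t1 * t2 * t3 = 1 := by linarith
    rw [this]; norm_num
  have h2 : t1 * t2 * t3 + 1 ≠ 0 := by
    intro h'; apply h; have : t1 * t2 * t3 = -1 := by linarith
    rw [this]; norm_num
  subst ha1 ha2 ha3
  refine ⟨⟨(1 + 2*t1*t2 + 2*t1*t2^2*t3 + t1^2*t2^2*t3^2) /
      ((t1 * t2 * t3 - 1) * (t1 * t2 * t3 + 1)), ?_⟩,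
    ⟨(1 + 2*t1*t3 + 2*t1^2*t2*t3 + t1^2*t2^2*t3^2) /
      ((t1 * t2 * t3 - 1) * (t1 * t2 * t3 + 1)), ?_⟩,
    ⟨(1 + 2*t2*t3 + 2*t1*t2*t3^2 + t1^2*t2^2*t3^2) /
      ((t1 * t2 * t3 - 1) * (t1 * t2 * t3 + 1)), ?_⟩⟩ <;>
  · rw [div_mul_div_comm, div_pow, div_add_one (mul_ne_zero (mul_ne_zero h1 h2) (mul_ne_zero h1 h2)), div_eq_div_iff (mul_ne_zero (mul_ne_zero h1 h2) (mul_ne_zero h1 h2)) (pow_ne_zero 2 (mul_ne_zero h1 h2))]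
    ring
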